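/- Let f(∂,λ) ∈ C[∂,λ] be a polynomial in two variables satisfying the identity (∂ + μ + γ + 2λ)·f(-μ-γ, μ) = (μ - γ)·f(∂ + μ + γ, λ) in the polynomial ring C[∂, λ, μ, γ]. Then there exists a constant a ∈ C such that f(∂,λ) = a(∂ + 2λ). -/
import Mathlib


open MvPolynomial

/-- The variables `∂, λ, μ, γ` of `ℂ[∂,λ,μ,γ]`, and `∂, λ` of `ℂ[∂,λ]`. -/
local notation "pd" => (X 0 : MvPolynomial (Fin 4) ℂ)
local notation "pl" => (X 1 : MvPolynomial (Fin 4) ℂ)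
local notation "pm" => (X 2 : MvPolynomial (Fin 4) ℂ)
local notation "pg" => (X 3 : MvPolynomial (Fin 4) ℂ)

private lemma aeval_eq_eval' {n : ℕ} (v : Fin n → ℂ) (p : MvPolynomial (Fin n) ℂ) :
    aeval v p = eval v p := by rw [← coe_aeval_eq_eval]; rfl

/-- if `f(∂,λ) ∈ ℂ[∂,λ]` satisfies
`(∂+μ+γ+2λ)·f(-μ-γ,μ) = (μ-γ)·f(∂+μ+γ,λ)` in `ℂ[∂,λ,μ,γ]`, then `f = a(∂+2λ)`
for some constant `a ∈ ℂ`. -/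
theorem stmt8 (f : MvPolynomial (Fin 2) ℂ)
    (h : (pd + pm + pg + 2 * pl) * aeval ![-pm - pg, pm] f
        = (pm - pg) * aeval ![pd + pm + pg, pl] f) :
    ∃ a : ℂ, f = C a * (X 0 + 2 * X 1) := by
  have key : ∀ d l m g : ℂ,
      (d + m + g + 2 * l) * eval ![-m - g, m] f = (m - g) * eval ![d + m + g, l] f := by
    intro d l m g
    have h2 := congrArg (eval ![d, l, m, g]) h
    have e1 : eval ![d, l, m, g] (aeval ![-pm - pg, pm] f) = eval ![-m - g, m] f := by
      rw [← aeval_eq_eval', comp_aeval_apply]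
      have hv : (fun i => aeval ![d, l, m, g] (![-pm - pg, pm] i)) = ![-m - g, m] := by
        funext i; fin_cases i <;> simp
      rw [hv, aeval_eq_eval']
    have e2 : eval ![d, l, m, g] (aeval ![pd + pm + pg, pl] f) = eval ![d + m + g, l] f := by
      rw [← aeval_eq_eval', comp_aeval_apply]
      have hv : (fun i => aeval ![d, l, m, g] (![pd + pm + pg, pl] i)) = ![d + m + g, l] := by
        funext i; fin_cases i <;> simp
      rw [hv, aeval_eq_eval']
    simp only [map_mul, map_add, map_sub, map_ofNat, eval_X, e1, e2] at h2
    simpa using h2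
  -- specialize: for all x y s t, (s+2t) f(x,y) = (x+2y) f(s,t)
  have key2 : ∀ x y s t : ℂ,
      (s + 2 * t) * eval ![x, y] f = (x + 2 * y) * eval ![s, t] f := by
    intro x y s t
    have := key (x + s) t y (-x - y)
    have hv1 : (![-y - (-x - y), y] : Fin 2 → ℂ) = ![x, y] := by
      funext i; fin_cases i <;> simp; ring
    have hv2 : (![x + s + y + (-x - y), t] : Fin 2 → ℂ) = ![s, t] := by
      funext i; fin_cases i <;> simp
    rw [hv1, hv2] at this
    calc (s + 2 * t) * eval ![x, y] f
        = (x + s + y + (-x - y) + 2 * t) * eval ![x, y] f := by ring_nf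
      _ = (y - (-x - y)) * eval ![s, t] f := this
      _ = (x + 2 * y) * eval ![s, t] f := by ring_nf
  refine ⟨eval ![1, 0] f, ?_⟩
  apply MvPolynomial.funext
  intro v
  have hv : (![v 0, v 1] : Fin 2 → ℂ) = v := by
    funext i; fin_cases i <;> rfl
  have := key2 (v 0) (v 1) 1 0
  rw [hv] at this
  simp only [mul_zero, add_zero, mul_one, one_mul] at this
  simp [this]
  ring
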